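/- Let d > r ≥ 1 be integers, let U ∈ ℝ^{d×r} have orthonormal columns, let U_⊥ ∈ ℝ^{d×(d−r)} be such that [U U_⊥] is orthogonal, and let Q ∈ ℝ^{(d−r)×r} be arbitrary. Let S denote the unique symmetric positive definite square root of I_r + QᵀQ. Then the matrix Ũ = (U + U_⊥Q)·S⁻¹ has orthonormal columns (ŨᵀŨ = I_r) and satisfies ‖Ũ − U‖₂ ≤ 2‖Q‖₂. -/

import Mathlib

open Matrix

/-- The spectral norm (largest singular value) of a real matrix, i.e. the operator
norm of the associated linear map between Euclidean spaces. -/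
noncomputable def specNorm {m n : Type*} [Fintype m] [Fintype n] [DecidableEq n]
    (A : Matrix m n ℝ) : ℝ :=
  ‖LinearMap.toContinuousLinearMap (Matrix.toEuclideanLin A)‖

open scoped Matrix.Norms.L2Operator

lemma specNorm_eq_norm {m n : Type*} [Fintype m] [Fintype n] [DecidableEq n]
    (A : Matrix m n ℝ) : specNorm A = ‖A‖ := rfl

lemma euclid_norm_sq {n : Type*} [Fintype n] (v : EuclideanSpace ℝ n) :
    ‖v‖ ^ 2 = (WithLp.equiv 2 (n → ℝ) v) ⬝ᵥ (WithLp.equiv 2 (n → ℝ) v) := by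
  rw [EuclideanSpace.norm_eq, Real.sq_sqrt (by positivity)]
  simp only [Real.norm_eq_abs, sq_abs]
  simp only [dotProduct, pow_two]
  rfl

/-- If `B` is invertible and expands norms, then `‖B⁻¹‖ ≤ 1` in the L2 operator norm. -/
lemma norm_inv_le_one {n : Type*} [Fintype n] [DecidableEq n] (B : Matrix n n ℝ)
    (hB : IsUnit B.det)
    (h : ∀ x : n → ℝ, x ⬝ᵥ x ≤ (B *ᵥ x) ⬝ᵥ (B *ᵥ x)) : ‖B⁻¹‖ ≤ 1 := by
  rw [Matrix.l2_opNorm_def]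
  refine ContinuousLinearMap.opNorm_le_bound _ zero_le_one fun y => ?_
  rw [one_mul]
  set x : n → ℝ := B⁻¹ *ᵥ (WithLp.equiv 2 (n → ℝ) y) with hx
  have hBx : B *ᵥ x = WithLp.equiv 2 (n → ℝ) y := by
    rw [hx, Matrix.mulVec_mulVec, Matrix.mul_nonsing_inv B hB, Matrix.one_mulVec]
  have h1 : ((Matrix.toEuclideanLin.trans LinearMap.toContinuousLinearMap) B⁻¹) y
      = (WithLp.equiv 2 (n → ℝ)).symm x := rfl
  have h2 : ‖(WithLp.equiv 2 (n → ℝ)).symm x‖ ^ 2 ≤ ‖y‖ ^ 2 := by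
    rw [euclid_norm_sq, euclid_norm_sq]
    simpa [hBx] using h x
  rw [h1]
  nlinarith [norm_nonneg ((WithLp.equiv 2 (n → ℝ)).symm x), norm_nonneg y]

lemma dot_tmul_self {m n : Type*} [Fintype m] [Fintype n] (A : Matrix m n ℝ) (x : n → ℝ) :
    x ⬝ᵥ ((Aᵀ * A) *ᵥ x) = (A *ᵥ x) ⬝ᵥ (A *ᵥ x) := by
  rw [← Matrix.mulVec_mulVec, Matrix.dotProduct_mulVec, Matrix.vecMul_transpose]

lemma dot_self_nonneg {n : Type*} [Fintype n] (v : n → ℝ) : 0 ≤ v ⬝ᵥ v :=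
  Finset.sum_nonneg fun i _ => mul_self_nonneg _

/-- if U has orthonormal columns, [U U_⊥] is orthogonal, Q is arbitrary and
S is the unique symmetric positive definite square root of I + QᵀQ, then
Ũ = (U + U_⊥Q)S⁻¹ has orthonormal columns and ‖Ũ − U‖₂ ≤ 2‖Q‖₂. -/
theorem stmt5 (d r : ℕ) (hr : 1 ≤ r) (hd : r < d)
    (U : Matrix (Fin d) (Fin r) ℝ) (Uperp : Matrix (Fin d) (Fin (d - r)) ℝ)
    (hU : Uᵀ * U = 1)
    (horth : (Matrix.fromCols U Uperp)ᵀ * Matrix.fromCols U Uperp = 1)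
    (Q : Matrix (Fin (d - r)) (Fin r) ℝ)
    (S : Matrix (Fin r) (Fin r) ℝ) (hS : S.PosDef) (hSsq : S * S = 1 + Qᵀ * Q) :
    ((U + Uperp * Q) * S⁻¹)ᵀ * ((U + Uperp * Q) * S⁻¹) = 1 ∧
    specNorm ((U + Uperp * Q) * S⁻¹ - U) ≤ 2 * specNorm Q := by
  -- block structure of the orthogonality hypothesis
  have hblocks : fromBlocks (Uᵀ * U) (Uᵀ * Uperp) (Uperpᵀ * U) (Uperpᵀ * Uperp)
      = fromBlocks 1 0 0 1 := by
    rw [← Matrix.fromRows_mul_fromCols, ← Matrix.transpose_fromCols, horth,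
      Matrix.fromBlocks_one]
  have hUUp : Uᵀ * Uperp = 0 := ((Matrix.fromBlocks_inj.mp hblocks).2.1)
  have hUpU : Uperpᵀ * U = 0 := ((Matrix.fromBlocks_inj.mp hblocks).2.2.1)
  have hUpUp : Uperpᵀ * Uperp = 1 := ((Matrix.fromBlocks_inj.mp hblocks).2.2.2)
  -- basic facts about S
  have hSt : Sᵀ = S := by
    have := hS.1.eq
    rwa [Matrix.conjTranspose_eq_transpose_of_trivial] at this
  have hSdet : IsUnit S.det := isUnit_iff_ne_zero.mpr (ne_of_gt hS.det_pos)
  have hSinvS : S⁻¹ * S = 1 := Matrix.nonsing_inv_mul S hSdet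
  have hSSinv : S * S⁻¹ = 1 := Matrix.mul_nonsing_inv S hSdet
  have hSinvT : (S⁻¹)ᵀ = S⁻¹ := by rw [Matrix.transpose_nonsing_inv, hSt]
  set V := U + Uperp * Q with hV
  have hVtV : Vᵀ * V = S * S := by
    rw [hV, hSsq]
    rw [Matrix.transpose_add, Matrix.transpose_mul, Matrix.add_mul, Matrix.mul_add, Matrix.mul_add, hU]
    rw [show Uᵀ * (Uperp * Q) = 0 by rw [← Matrix.mul_assoc, hUUp, Matrix.zero_mul]]
    rw [show Qᵀ * Uperpᵀ * U = 0 by rw [Matrix.mul_assoc, hUpU, Matrix.mul_zero]]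
    rw [show Qᵀ * Uperpᵀ * (Uperp * Q) = Qᵀ * Q by
      rw [Matrix.mul_assoc Qᵀ, ← Matrix.mul_assoc Uperpᵀ, hUpUp, Matrix.one_mul]]
    simp
  have hVtU : Vᵀ * U = 1 := by
    rw [hV, Matrix.transpose_add, Matrix.transpose_mul, Matrix.add_mul, hU,
      Matrix.mul_assoc, hUpU, Matrix.mul_zero, add_zero]
  have hUtV : Uᵀ * V = 1 := by
    have := congrArg Matrix.transpose hVtU
    rwa [Matrix.transpose_mul, Matrix.transpose_transpose, Matrix.transpose_one] at this
  -- part 1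
  have part1 : (V * S⁻¹)ᵀ * (V * S⁻¹) = 1 := by
    rw [Matrix.transpose_mul, hSinvT, Matrix.mul_assoc, ← Matrix.mul_assoc Vᵀ, hVtV,
      ← Matrix.mul_assoc, ← Matrix.mul_assoc, hSinvS, Matrix.one_mul, hSSinv]
  refine ⟨part1, ?_⟩
  -- part 2
  set D := V * S⁻¹ - U with hD
  have hDtD : Dᵀ * D = (2 : ℝ) • (1 - S⁻¹) := by
    rw [hD, Matrix.transpose_sub, Matrix.sub_mul, Matrix.mul_sub, Matrix.mul_sub, part1, hU]
    rw [show (V * S⁻¹)ᵀ * U = S⁻¹ by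
      rw [Matrix.transpose_mul, hSinvT, Matrix.mul_assoc, hVtU, Matrix.mul_one]]
    rw [show Uᵀ * (V * S⁻¹) = S⁻¹ by rw [← Matrix.mul_assoc, hUtV, Matrix.one_mul]]
    rw [two_smul]
    abel
  have hSp : (S + 1).PosDef := hS.add_posSemidef Matrix.PosSemidef.one
  have hSpdet : IsUnit (S + 1).det := isUnit_iff_ne_zero.mpr (ne_of_gt hSp.det_pos)
  have key : (1 : Matrix (Fin r) (Fin r) ℝ) - S⁻¹ = S⁻¹ * (Qᵀ * Q) * (S + 1)⁻¹ := by
    have h1 : (1 - S⁻¹) * (S + 1) = S⁻¹ * (Qᵀ * Q) := by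
      rw [Matrix.sub_mul, Matrix.mul_add, Matrix.mul_add, hSinvS, Matrix.one_mul,
        Matrix.mul_one, Matrix.mul_one]
      have hQQS : Qᵀ * Q = S * S - 1 := by rw [hSsq]; abel
      rw [hQQS, Matrix.mul_sub, ← Matrix.mul_assoc, hSinvS, Matrix.one_mul, Matrix.mul_one]
      abel
    calc (1 : Matrix (Fin r) (Fin r) ℝ) - S⁻¹
        = (1 - S⁻¹) * (S + 1) * (S + 1)⁻¹ := by
          rw [Matrix.mul_nonsing_inv_cancel_right _ _ hSpdet]
      _ = S⁻¹ * (Qᵀ * Q) * (S + 1)⁻¹ := by rw [h1]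
  -- norm bounds
  have hSinv_norm : ‖S⁻¹‖ ≤ 1 := by
    refine norm_inv_le_one S hSdet fun x => ?_
    have e : (S *ᵥ x) ⬝ᵥ (S *ᵥ x) = x ⬝ᵥ x + (Q *ᵥ x) ⬝ᵥ (Q *ᵥ x) := by
      rw [← dot_tmul_self S x, hSt, hSsq, Matrix.add_mulVec, Matrix.one_mulVec,
        dotProduct_add]
      congr 1
      exact dot_tmul_self Q x
    rw [e]
    have := dot_self_nonneg (Q *ᵥ x)
    linarith
  have hSp_norm : ‖(S + 1)⁻¹‖ ≤ 1 := by
    refine norm_inv_le_one (S + 1) hSpdet fun x => ?_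
    have e : ((S + 1) *ᵥ x) ⬝ᵥ ((S + 1) *ᵥ x)
        = x ⬝ᵥ x + (Q *ᵥ x) ⬝ᵥ (Q *ᵥ x) + 2 * (x ⬝ᵥ (S *ᵥ x)) + x ⬝ᵥ x := by
      rw [← dot_tmul_self (S + 1) x]
      have expand : (S + 1)ᵀ * (S + 1) = (1 + Qᵀ * Q) + (S + S) + 1 := by
        rw [Matrix.transpose_add, hSt, Matrix.transpose_one, Matrix.add_mul, Matrix.mul_add,
          Matrix.mul_add, hSsq, Matrix.mul_one, Matrix.one_mul, Matrix.one_mul]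
        abel
      rw [expand]
      simp only [Matrix.add_mulVec, Matrix.one_mulVec, dotProduct_add]
      rw [dot_tmul_self Q x]
      ring
    rw [e]
    have h1 := dot_self_nonneg (Q *ᵥ x)
    have h2 := hS.posSemidef.dotProduct_mulVec_nonneg x
    rw [star_trivial] at h2
    have h3 := dot_self_nonneg x
    linarith
  have hQQ : ‖Qᵀ * Q‖ = ‖Q‖ * ‖Q‖ := by
    have : Qᵀ = Qᴴ := (Matrix.conjTranspose_eq_transpose_of_trivial Q).symm
    rw [this, Matrix.l2_opNorm_conjTranspose_mul_self]
  have hbound : ‖(1 : Matrix (Fin r) (Fin r) ℝ) - S⁻¹‖ ≤ ‖Q‖ * ‖Q‖ := by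
    rw [key]
    calc ‖S⁻¹ * (Qᵀ * Q) * (S + 1)⁻¹‖
        ≤ ‖S⁻¹ * (Qᵀ * Q)‖ * ‖(S + 1)⁻¹‖ := Matrix.l2_opNorm_mul _ _
      _ ≤ ‖S⁻¹‖ * ‖Qᵀ * Q‖ * ‖(S + 1)⁻¹‖ := by
          apply mul_le_mul_of_nonneg_right (Matrix.l2_opNorm_mul _ _) (norm_nonneg _)
      _ ≤ 1 * (‖Q‖ * ‖Q‖) * 1 := by
          rw [hQQ]
          apply mul_le_mul ?_ hSp_norm (norm_nonneg _) (by positivity)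
          exact mul_le_mul_of_nonneg_right hSinv_norm (by positivity)
      _ = ‖Q‖ * ‖Q‖ := by ring
  have hDsq : ‖D‖ * ‖D‖ ≤ 2 * (‖Q‖ * ‖Q‖) := by
    have c1 : ‖Dᴴ * D‖ = ‖D‖ * ‖D‖ := Matrix.l2_opNorm_conjTranspose_mul_self D
    have c2 : Dᴴ = Dᵀ := Matrix.conjTranspose_eq_transpose_of_trivial D
    rw [c2, hDtD] at c1
    rw [← c1, norm_smul]
    simp only [Real.norm_ofNat]
    have : (2:ℝ) * ‖(1 : Matrix (Fin r) (Fin r) ℝ) - S⁻¹‖ ≤ 2 * (‖Q‖ * ‖Q‖) := by linarith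
    exact this
  rw [specNorm_eq_norm, specNorm_eq_norm]
  nlinarith [norm_nonneg D, norm_nonneg Q]
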